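/- Let (B̃, Λ) be a compatible pair. Then B̃ has full rank n; that is, the n columns of B̃ are linearly independent over ℚ (equivalently, the rank of B̃ regarded as a matrix over ℚ equals n). -/

import Mathlib

open Matrix

/-- The positive part `[a]_+ = max (a, 0)` of an integer. -/
def posPart (a : ℤ) : ℤ := max a 0

/-- `(B̃, Λ)` is a compatible pair with diagonal `D = diag (d 0, …, d (n-1))`:
`Λ` is skew-symmetric and `B̃ᵀ Λ = (D 0)`. -/
def IsCompatiblePair {m n : ℕ} (hnm : n ≤ m)
    (B : Matrix (Fin m) (Fin n) ℤ) (L : Matrix (Fin m) (Fin m) ℤ)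
    (d : Fin n → ℤ) : Prop :=
  Lᵀ = -L ∧ (∀ i, 0 < d i) ∧
    ∀ (i : Fin n) (j : Fin m),
      (Bᵀ * L) i j = if (j : ℕ) = (i : ℕ) then d i else 0

/-- **A compatible pair has full-rank exchange matrix.**  If `(B̃, Λ)` is a compatible
pair, then `B̃` has full rank `n` over `ℚ`. -/
theorem compatible_full_rank {m n : ℕ} (hn : 1 ≤ n) (hnm : n ≤ m)
    (B : Matrix (Fin m) (Fin n) ℤ) (L : Matrix (Fin m) (Fin m) ℤ)
    (d : Fin n → ℤ) (hcompat : IsCompatiblePair hnm B L d) :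
    (B.map (fun x : ℤ => (x : ℚ))).rank = n := by
  obtain ⟨-, hd, hBL⟩ := hcompat
  set f : ℤ →+* ℚ := Int.castRingHom ℚ
  set C : Matrix (Fin n) (Fin m) ℚ := (Bᵀ * L).map f
  have hCentry : ∀ (i : Fin n) (j : Fin m),
      C i j = if (j : ℕ) = (i : ℕ) then (d i : ℚ) else 0 := by
    intro i j
    simp only [C, Matrix.map_apply, hBL i j]
    split <;> simp
  -- C has rank n: its mulVecLin is surjective
  have hsurj : Function.Surjective C.mulVecLin := by
    intro u
    refine ⟨fun j => if h : (j : ℕ) < n then u ⟨j, h⟩ / (d ⟨j, h⟩ : ℚ) else 0, ?_⟩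
    funext i
    have hi : (i : ℕ) < m := lt_of_lt_of_le i.isLt hnm
    have hdne : (d i : ℚ) ≠ 0 := Int.cast_ne_zero.mpr (hd i).ne'
    have : ∀ j : Fin m,
        C i j * (if h : (j : ℕ) < n then u ⟨j, h⟩ / (d ⟨j, h⟩ : ℚ) else 0)
          = if j = (⟨(i : ℕ), hi⟩ : Fin m) then u i else 0 := by
      intro j
      rw [hCentry]
      by_cases hji : (j : ℕ) = (i : ℕ)
      · have hjn : (j : ℕ) < n := hji ▸ i.isLt
        have hj : j = (⟨(i : ℕ), hi⟩ : Fin m) := by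
          ext; exact hji
        have : (⟨(j : ℕ), hjn⟩ : Fin n) = i := by ext; exact hji
        simp only [hji, hjn, hj, this, dif_pos, if_pos rfl]
        simp only [if_true, dif_pos i.isLt, Fin.eta]
        field_simp
      · have hj : j ≠ (⟨(i : ℕ), hi⟩ : Fin m) := by
          intro h; exact hji (by rw [h])
        simp [hji, hj]
    simp only [mulVecLin_apply, mulVec, dotProduct, this]
    simp
  have hCrank : C.rank = n := by
    rw [Matrix.rank, LinearMap.range_eq_top.mpr hsurj]
    simp
  have hmap : C = (B.map (fun x : ℤ => (x : ℚ)))ᵀ * (L.map (fun x : ℤ => (x : ℚ))) := by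
    show (Bᵀ * L).map f = _
    rw [Matrix.map_mul]
    rfl
  have h1 : n ≤ (B.map (fun x : ℤ => (x : ℚ))).rank := by
    calc n = C.rank := hCrank.symm
    _ ≤ ((B.map (fun x : ℤ => (x : ℚ)))ᵀ).rank := by
        rw [hmap]; exact Matrix.rank_mul_le_left _ _
    _ = (B.map (fun x : ℤ => (x : ℚ))).rank := Matrix.rank_transpose _
  exact le_antisymm (Matrix.rank_le_width _) h1
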